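/- Let x be a smooth positive solution of the QP system ẋ_i = x_i Σ_j A_{ij} Π_l x_l^{B_{jl}}. Then the quasi-monomials u_j(t) := Π_l x_l(t)^{B_{jl}} satisfy the Lotka-Volterra system u̇_j = u_j · Σ_m (B·A)_{jm} · u_m. -/

import Mathlib

open Matrix Finset

/-- For a smooth positive solution of a general (possibly non-square) QP system,
the quasi-monomials `u j t = ∏ l, x t l ^ B j l` satisfy the Lotka-Volterra system
`u̇ j = u j * ∑ m, (B * A) j m * u m`. -/
theorem qp_monomials_satisfy_lotka_volterra (n N : ℕ)
    (A : Matrix (Fin n) (Fin N) ℝ) (B : Matrix (Fin N) (Fin n) ℝ)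
    (x : ℝ → Fin n → ℝ) (hpos : ∀ t i, 0 < x t i)
    (hx : ∀ t i, HasDerivAt (fun s => x s i)
      (x t i * ∑ j, A i j * ∏ l, x t l ^ B j l) t) :
    ∀ t j, HasDerivAt (fun s => ∏ l, x s l ^ B j l)
      ((∏ l, x t l ^ B j l) * ∑ m, (B * A) j m * ∏ l, x t l ^ B m l) t := by
  intro t j
  have hprod : ∀ s, (∏ l, x s l ^ B j l) = Real.exp (∑ l, B j l * Real.log (x s l)) := by
    intro s
    rw [Real.exp_sum]
    exact Finset.prod_congr rfl fun l _ => by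
      rw [Real.rpow_def_of_pos (hpos s l), mul_comm]
  have hlog : ∀ l : Fin n, HasDerivAt (fun s => B j l * Real.log (x s l))
      (B j l * (∑ m, A l m * ∏ k, x t k ^ B m k)) t := by
    intro l
    have h := (hx t l).log (hpos t l).ne'
    have hdiv : (x t l * ∑ m, A l m * ∏ k, x t k ^ B m k) / x t l
        = ∑ m, A l m * ∏ k, x t k ^ B m k :=
      mul_div_cancel_left₀ _ (hpos t l).ne'
    rw [hdiv] at h
    exact h.const_mul _
  have hexp := (HasDerivAt.fun_sum (u := Finset.univ) (fun l _ => hlog l)).exp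
  have heq : (fun s => Real.exp (∑ l, B j l * Real.log (x s l)))
      = fun s => ∏ l, x s l ^ B j l := funext fun s => (hprod s).symm
  rw [heq] at hexp
  convert hexp using 1
  rw [← hprod t]
  congr 1
  simp only [Matrix.mul_apply, Finset.sum_mul, Finset.mul_sum]
  rw [Finset.sum_comm]
  exact Finset.sum_congr rfl fun l _ => Finset.sum_congr rfl fun m _ => by ring
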